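/- Let A be a commutative ring, S ⊆ A a multiplicative submonoid, λ : A → S⁻¹A the localization map, and let C be any sub-A-algebra of S⁻¹A. Then C is a (multi-centered) dilatation of A: there exist an index type I, elements a_i ∈ S and ideals M_i ⊆ A (i ∈ I) such that C equals the sub-A-algebra of S⁻¹A generated by the fractions λ(m)·λ(a_i)⁻¹ for i ∈ I and m ∈ M_i. -/

import Mathlib

universe u

lemma mk'_eq_mul_inverse {A : Type u} [CommRing A] (S : Submonoid A) (m : A) (s : S) :
    IsLocalization.mk' (Localization S) m s =
      algebraMap A (Localization S) m *
        Ring.inverse (algebraMap A (Localization S) (s : A)) := by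
  have hu : IsUnit (algebraMap A (Localization S) (s : A)) :=
    IsLocalization.map_units (Localization S) s
  rw [Ring.inverse, dif_pos hu]
  rw [Units.eq_mul_inv_iff_mul_eq, IsUnit.unit_spec, IsLocalization.mk'_spec]

/-- Every sub-`A`-algebra of a localization `S⁻¹A` is a multi-centered dilatation of `A`:
there are an index type `I`, elements `a_i ∈ S` and ideals `M_i ⊆ A` such that `C` is the
sub-`A`-algebra of `S⁻¹A` generated by the fractions `λ(m)·λ(a_i)⁻¹`, `i ∈ I`, `m ∈ M_i`. -/
theorem subalgebra_of_localization_is_dilatation {A : Type u} [CommRing A]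
    (S : Submonoid A) (C : Subalgebra A (Localization S)) :
    ∃ (I : Type u) (a : I → A) (_ : ∀ i, a i ∈ S) (M : I → Ideal A),
      C = Algebra.adjoin A {x : Localization S | ∃ i, ∃ m ∈ M i,
        x = algebraMap A (Localization S) m *
            Ring.inverse (algebraMap A (Localization S) (a i))} := by
  choose m s hms using fun c : C => (by
    obtain ⟨⟨r, t⟩, h⟩ := IsLocalization.mk'_surjective (M := S) (S := Localization S) (c : Localization S)
    exact ⟨r, t, h⟩ : ∃ (r : A) (t : S), IsLocalization.mk' (Localization S) r t = (c : Localization S))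
  refine ⟨C, fun c => (s c : A), fun c => (s c).2, fun c => Ideal.span {m c}, ?_⟩
  apply le_antisymm
  · intro x hx
    have : x ∈ {x : Localization S | ∃ i, ∃ r ∈ Ideal.span {m i},
        x = algebraMap A (Localization S) r *
          Ring.inverse (algebraMap A (Localization S) ((s i : A)))} := by
      exact ⟨⟨x, hx⟩, m ⟨x, hx⟩, Ideal.subset_span rfl, by
        rw [← mk'_eq_mul_inverse, hms ⟨x, hx⟩]⟩
    exact Algebra.subset_adjoin this
  · rw [Algebra.adjoin_le_iff]
    rintro x ⟨i, r, hr, rfl⟩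
    rw [Ideal.mem_span_singleton] at hr
    obtain ⟨t, rfl⟩ := hr
    have : (algebraMap A (Localization S)) (m i * t) *
        Ring.inverse ((algebraMap A (Localization S)) ((s i : A))) =
        algebraMap A (Localization S) t * (i : Localization S) := by
      rw [← hms i, mk'_eq_mul_inverse, map_mul]; ring
    rw [this]
    exact C.mul_mem (C.algebraMap_mem t) i.2
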